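/- Let M_2 ⊕ M_2 denote the subspace of M_4(ℂ) consisting of all block diagonal matrices [[A,0],[0,B]] with A, B ∈ M_2(ℂ). For every rank 3 orthogonal projection P ∈ M_4(ℂ) there exists a nonzero matrix C ∈ M_2 ⊕ M_2 with PCP = 0. Consequently, every operator system V ⊆ M_4(ℂ) with M_2 ⊕ M_2 ⊆ V and dim(V) = 9 is triangle-free. -/
import Mathlib


open Matrix

/-- An orthogonal projection in `M_n(ℂ)`: a Hermitian idempotent matrix. -/
def IsProjection {n : ℕ} (P : Matrix (Fin n) (Fin n) ℂ) : Prop :=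
  P.IsHermitian ∧ P * P = P

/-- The compression space `PVP = span {PAP : A ∈ V}`. -/
noncomputable def compressionSpace {n : ℕ} (V : Set (Matrix (Fin n) (Fin n) ℂ))
    (P : Matrix (Fin n) (Fin n) ℂ) : Submodule ℂ (Matrix (Fin n) (Fin n) ℂ) :=
  Submodule.span ℂ ((fun A => P * A * P) '' V)

/-- A `k`-clique for `V`: a rank-`k` projection `P` with `dim (PVP) = k²`. -/
def IsClique {n : ℕ} (V : Set (Matrix (Fin n) (Fin n) ℂ)) (k : ℕ)
    (P : Matrix (Fin n) (Fin n) ℂ) : Prop :=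
  IsProjection P ∧ P.rank = k ∧ Module.finrank ℂ (compressionSpace V P) = k ^ 2

/-- A `k`-anticlique for `V`: a rank-`k` projection `P` such that `PAP` is a scalar
multiple of `P` for every `A ∈ V`. -/
def IsAnticlique {n : ℕ} (V : Set (Matrix (Fin n) (Fin n) ℂ)) (k : ℕ)
    (P : Matrix (Fin n) (Fin n) ℂ) : Prop :=
  IsProjection P ∧ P.rank = k ∧ ∀ A ∈ V, ∃ c : ℂ, P * A * P = c • P

/-- `V` is triangle-free if it has no 3-clique. -/
def TriangleFree {n : ℕ} (V : Set (Matrix (Fin n) (Fin n) ℂ)) : Prop :=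
  ∀ P : Matrix (Fin n) (Fin n) ℂ, ¬ IsClique V 3 P

/-- `V` is strongly triangle-free if every rank-3 projection dominates a 2-anticlique. -/
def StronglyTriangleFree {n : ℕ} (V : Set (Matrix (Fin n) (Fin n) ℂ)) : Prop :=
  ∀ Q : Matrix (Fin n) (Fin n) ℂ, IsProjection Q → Q.rank = 3 →
    ∃ P : Matrix (Fin n) (Fin n) ℂ, IsAnticlique V 2 P ∧ P * Q = P ∧ Q * P = P

/-- The subspace `M₂ ⊕ M₂` of `M₄(ℂ)`: block diagonal matrices `[[A,0],[0,B]]`,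
i.e. matrices whose entries vanish whenever the row and column indices lie in
different blocks `{0,1}` and `{2,3}`. -/
def M2oplusM2 : Set (Matrix (Fin 4) (Fin 4) ℂ) :=
  { M | ∀ i j : Fin 4, ¬ ((i : ℕ) < 2 ↔ (j : ℕ) < 2) → M i j = 0 }

lemma part1 (P : Matrix (Fin 4) (Fin 4) ℂ) (hP : IsProjection P) (hrk : P.rank = 3) :
    ∃ C ∈ M2oplusM2, C ≠ 0 ∧ P * C * P = 0 := by
  obtain ⟨v, hv0, hPv⟩ : ∃ v : Fin 4 → ℂ, v ≠ 0 ∧ P.mulVec v = 0 := by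
    by_contra h
    push_neg at h
    have hinj : Function.Injective P.mulVecLin := by
      rw [← LinearMap.ker_eq_bot, Submodule.eq_bot_iff]
      intro v hv
      by_contra hv0
      exact (h v hv0) hv
    have : P.rank = 4 := by
      have := LinearMap.finrank_range_of_inj hinj
      simpa [Matrix.rank] using this
    omega
  set s : Fin 4 → ℂ := fun i => if (i : ℕ) < 2 then 1 else -1 with hs
  have hsne : ∀ i, s i ≠ 0 := by
    intro i; simp only [hs]; split <;> simp
  set Q : Matrix (Fin 4) (Fin 4) ℂ := Matrix.of fun i j => v i * star (v j) with hQ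
  set S : Matrix (Fin 4) (Fin 4) ℂ := Matrix.diagonal s with hS
  have hPQ : P * Q = 0 := by
    ext i j
    simp only [Matrix.mul_apply, hQ, Matrix.of_apply, Matrix.zero_apply]
    have hh : (∑ k, P i k * (v k * star (v j))) = (∑ k, P i k * v k) * star (v j) := by
      rw [Finset.sum_mul]; exact Finset.sum_congr rfl fun k _ => by ring
    rw [hh]
    have : (∑ k, P i k * v k) = P.mulVec v i := rfl
    rw [this, hPv]; simp
  have hQP : Q * P = 0 := by
    ext i j
    simp only [Matrix.mul_apply, hQ, Matrix.of_apply, Matrix.zero_apply]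
    have : (∑ k, v i * star (v k) * P k j) = v i * star (∑ k, P j k * v k) := by
      rw [star_sum, Finset.mul_sum]
      congr 1; ext k
      have : P k j = star (P j k) := by
        conv_lhs => rw [← hP.1]
        rfl
      rw [this, StarMul.star_mul]; ring
    rw [this]
    have h2 : (∑ k, P j k * v k) = P.mulVec v j := rfl
    rw [h2, hPv]; simp
  refine ⟨S * Q + Q * S, ?_, ?_, ?_⟩
  · intro i j hij
    have hsum : s i + s j = 0 := by
      simp only [hs]
      by_cases hi : (i : ℕ) < 2
      · have hj : ¬ (j : ℕ) < 2 := fun hj => hij ⟨fun _ => hj, fun _ => hi⟩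
        simp [hi, hj]
      · have hj : (j : ℕ) < 2 := by
          by_contra hj
          exact hij ⟨fun h => absurd h hi, fun h => absurd h hj⟩
        simp [hi, hj]
    simp only [Matrix.add_apply, hS, Matrix.diagonal_mul, Matrix.mul_diagonal]
    have : s i * Q i j + Q i j * s j = (s i + s j) * Q i j := by ring
    rw [this, hsum, zero_mul]
  · obtain ⟨i, hi⟩ := Function.ne_iff.mp hv0
    simp only [Pi.zero_apply] at hi
    intro hC
    have h0 := congrFun (congrFun hC i) i
    simp only [Matrix.add_apply, hS, Matrix.diagonal_mul, Matrix.mul_diagonal,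
      Matrix.zero_apply] at h0
    have hQii : Q i i ≠ 0 := by
      simp only [hQ, Matrix.of_apply]
      exact mul_ne_zero hi (star_ne_zero.mpr hi)
    have h0' : (2 * s i) * Q i i = 0 := by linear_combination h0
    rcases mul_eq_zero.mp h0' with h | h
    · exact hsne i ((mul_eq_zero.mp h).resolve_left two_ne_zero)
    · exact hQii h
  · have h1 : P * (S * Q) * P = 0 := by
      rw [← mul_assoc, mul_assoc (P * S), hQP, mul_zero]
    have h2 : P * (Q * S) * P = 0 := by
      rw [← mul_assoc, hPQ, zero_mul, zero_mul]
    rw [mul_add, add_mul, h1, h2, add_zero]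

lemma part2
  (part1 : ∀ P : Matrix (Fin 4) (Fin 4) ℂ, IsProjection P → P.rank = 3 →
      ∃ C ∈ M2oplusM2, C ≠ 0 ∧ P * C * P = 0)
  (V : Submodule ℂ (Matrix (Fin 4) (Fin 4) ℂ))
  (hsub : M2oplusM2 ⊆ (V : Set (Matrix (Fin 4) (Fin 4) ℂ)))
  (hdim : Module.finrank ℂ V = 9) :
    TriangleFree (V : Set (Matrix (Fin 4) (Fin 4) ℂ)) := by
  rintro P ⟨hproj, hrank, hcomp⟩
  obtain ⟨C, hCmem, hC0, hPCP⟩ := part1 P hproj hrank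
  set φ : Matrix (Fin 4) (Fin 4) ℂ →ₗ[ℂ] Matrix (Fin 4) (Fin 4) ℂ :=
    (LinearMap.mulLeft ℂ P).comp (LinearMap.mulRight ℂ P) with hφdef
  have hφ : ∀ A, φ A = P * A * P := fun A => (mul_assoc P A P).symm
  set ψ : V →ₗ[ℂ] Matrix (Fin 4) (Fin 4) ℂ := φ.comp V.subtype with hψdef
  have hcs : compressionSpace (V : Set _) P = LinearMap.range ψ := by
    have h1 : (fun A => P * A * P) '' (V : Set _) = φ '' (V : Set _) := by
      apply Set.image_congr
      intro A _
      rw [hφ]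
    rw [compressionSpace, h1, Submodule.span_image, Submodule.span_eq]
    rw [hψdef, LinearMap.range_comp, Submodule.range_subtype]
  have hrn := LinearMap.finrank_range_add_finrank_ker ψ
  rw [hdim] at hrn
  have hker : LinearMap.ker ψ ≠ ⊥ := by
    intro hbot
    have hCk : (⟨C, hsub hCmem⟩ : V) ∈ LinearMap.ker ψ := by
      simp only [LinearMap.mem_ker, hψdef, LinearMap.comp_apply, Submodule.subtype_apply]
      rw [hφ]; exact hPCP
    rw [hbot, Submodule.mem_bot] at hCk
    exact hC0 (congrArg Subtype.val hCk)
  have hkerpos : 0 < Module.finrank ℂ (LinearMap.ker ψ) := by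
    rcases Nat.eq_zero_or_pos (Module.finrank ℂ (LinearMap.ker ψ)) with h | h
    · exact absurd (Submodule.finrank_eq_zero.mp h) hker
    · exact h
  rw [hcs] at hcomp
  norm_num at hcomp
  omega

/-- For every rank 3 projection `P ∈ M₄(ℂ)` there is a nonzero matrix in
`M₂ ⊕ M₂` compressing to zero on the range of `P`; consequently every
9-dimensional operator system containing `M₂ ⊕ M₂` is triangle-free. -/
theorem m2_oplus_m2_extensions_triangleFree :
    (∀ P : Matrix (Fin 4) (Fin 4) ℂ, IsProjection P → P.rank = 3 →
      ∃ C ∈ M2oplusM2, C ≠ 0 ∧ P * C * P = 0) ∧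
    (∀ V : Submodule ℂ (Matrix (Fin 4) (Fin 4) ℂ),
      (1 : Matrix (Fin 4) (Fin 4) ℂ) ∈ V → (∀ A ∈ V, Aᴴ ∈ V) →
      M2oplusM2 ⊆ (V : Set (Matrix (Fin 4) (Fin 4) ℂ)) →
      Module.finrank ℂ V = 9 →
      TriangleFree (V : Set (Matrix (Fin 4) (Fin 4) ℂ))) := by
  refine ⟨part1, ?_⟩
  intro V _ _ hsub hdim
  exact part2 part1 V hsub hdim
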